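/- Any finite product S_Φ = V_{φ_0}(β) V_{φ_1}(β) ⋯ V_{φ_n}(β) of phased boosts has the form [[P, Q·sinh β],[Q*·sinh β, P*]] where, writing x = cosh β, P and Q are polynomials in x with complex coefficients, deg P ≤ n+1, deg Q ≤ n, P has parity (n+1) mod 2, Q has parity n mod 2, and |P|² − (x² − 1)|Q|² = 1 for all β. -/

import Mathlib

open Matrix Complex Polynomial

/-- The phased boost `V_φ(β)`. -/
noncomputable def phasedBoost (φ β : ℝ) : Matrix (Fin 2) (Fin 2) ℂ :=
  !![(Real.cosh β : ℂ), Complex.exp (Complex.I * φ) * Real.sinh β;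
     Complex.exp (-(Complex.I * φ)) * Real.sinh β, (Real.cosh β : ℂ)]


private lemma evalMapConj (Q : Polynomial ℂ) (x : ℝ) :
    (Q.map (starRingEnd ℂ)).eval (x : ℂ) = (starRingEnd ℂ) (Q.eval (x:ℂ)) := by
  conv_lhs => rw [← Complex.conj_ofReal x]
  rw [Polynomial.eval_map, Polynomial.eval₂_at_apply]

private lemma expConjHelper (φ : ℝ) :
    (starRingEnd ℂ) (Complex.exp (Complex.I * φ)) = Complex.exp (-(Complex.I * φ)) := by
  rw [← Complex.exp_conj]; congr 1
  simp [Complex.conj_I, Complex.conj_ofReal]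

private lemma heHelper (φ : ℝ) :
    Complex.exp (Complex.I * φ) * (starRingEnd ℂ) (Complex.exp (Complex.I * φ)) = 1 := by
  rw [expConjHelper, ← Complex.exp_add]; simp

private lemma normSq_iff (a b : ℂ) (x : ℝ) :
    (Complex.normSq a - (x ^ 2 - 1) * Complex.normSq b = 1) ↔
    (a * (starRingEnd ℂ) a - ((x:ℂ) ^ 2 - 1) * (b * (starRingEnd ℂ) b) = 1) := by
  rw [Complex.mul_conj, Complex.mul_conj]
  constructor <;> intro h <;> exact_mod_cast h

private lemma parity_mul {p q : Polynomial ℂ} {a b : ℕ}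
    (hp : ∀ k, p.coeff k ≠ 0 → k % 2 = a % 2)
    (hq : ∀ k, q.coeff k ≠ 0 → k % 2 = b % 2) :
    ∀ k, (p * q).coeff k ≠ 0 → k % 2 = (a + b) % 2 := by
  intro k h
  rw [Polynomial.coeff_mul] at h
  obtain ⟨⟨i, j⟩, hij, hne⟩ := Finset.exists_ne_zero_of_sum_ne_zero h
  rw [Finset.HasAntidiagonal.mem_antidiagonal] at hij
  have h1 := hp i (fun h' => hne (by simp [h']))
  have h2 := hq j (fun h' => hne (by simp [h']))
  omega

private lemma parity_X : ∀ k, (X : Polynomial ℂ).coeff k ≠ 0 → k % 2 = 1 % 2 := by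
  intro k h
  have : k = 1 := by
    by_contra hne
    simp [Polynomial.coeff_X, Ne.symm hne] at h
  omega

private lemma parity_C (e : ℂ) : ∀ k, (C e).coeff k ≠ 0 → k % 2 = 0 % 2 := by
  intro k h
  have : k = 0 := by
    by_contra hne
    simp [Polynomial.coeff_C, hne] at h
  omega

private lemma parity_X2sub1 : ∀ k, ((X : Polynomial ℂ) ^ 2 - 1).coeff k ≠ 0 → k % 2 = 0 % 2 := by
  intro k h
  have hk : k = 0 ∨ k = 2 := by
    by_contra hne
    push_neg at hne
    rw [Polynomial.coeff_sub, Polynomial.coeff_X_pow, Polynomial.coeff_one] at h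
    simp [hne.1, hne.2, Ne.symm hne.1, Ne.symm hne.2] at h
  omega

private lemma parity_map {q : Polynomial ℂ} {b : ℕ}
    (hq : ∀ k, q.coeff k ≠ 0 → k % 2 = b % 2) :
    ∀ k, (q.map (starRingEnd ℂ)).coeff k ≠ 0 → k % 2 = b % 2 := by
  intro k h
  apply hq
  rw [Polynomial.coeff_map] at h
  exact fun h' => h (by simp [h'])

private lemma parity_add {p q : Polynomial ℂ} {a : ℕ}
    (hp : ∀ k, p.coeff k ≠ 0 → k % 2 = a % 2)
    (hq : ∀ k, q.coeff k ≠ 0 → k % 2 = a % 2) :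
    ∀ k, (p + q).coeff k ≠ 0 → k % 2 = a % 2 := by
  intro k h
  rw [Polynomial.coeff_add] at h
  by_cases h1 : p.coeff k = 0
  · exact hq k (fun h2 => h (by simp [h1, h2]))
  · exact hp k h1

/-- Any product `V_{φ₀}(β) ⋯ V_{φₙ}(β)` of `n+1` phased boosts has the form
`[[P, Q sinh β], [Q* sinh β, P*]]` with `P, Q` polynomials in `x = cosh β` of
degrees at most `n+1` and `n`, having parities `(n+1) % 2` and `n % 2`
respectively, and satisfying `|P|² - (x² - 1)|Q|² = 1`. -/
theorem su11_qsp_functional_form (n : ℕ) (Φ : Fin (n + 1) → ℝ) :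
    ∃ P Q : Polynomial ℂ,
      P.natDegree ≤ n + 1 ∧ Q.natDegree ≤ n ∧
      (∀ k, P.coeff k ≠ 0 → k % 2 = (n + 1) % 2) ∧
      (∀ k, Q.coeff k ≠ 0 → k % 2 = n % 2) ∧
      (∀ β : ℝ,
        (List.ofFn fun i : Fin (n + 1) => phasedBoost (Φ i) β).prod =
          !![P.eval ((Real.cosh β : ℂ)),
             Q.eval ((Real.cosh β : ℂ)) * Real.sinh β;
             (starRingEnd ℂ) (Q.eval ((Real.cosh β : ℂ))) * Real.sinh β,
             (starRingEnd ℂ) (P.eval ((Real.cosh β : ℂ)))]) ∧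
      (∀ β : ℝ,
        Complex.normSq (P.eval ((Real.cosh β : ℂ))) -
          ((Real.cosh β) ^ 2 - 1) * Complex.normSq (Q.eval ((Real.cosh β : ℂ))) = 1) := by
  induction n with
  | zero =>
    refine ⟨X, C (Complex.exp (Complex.I * (Φ 0))), by simp, by simp, parity_X, parity_C _,
      ?_, ?_⟩
    · intro β
      simp only [List.ofFn_succ, List.ofFn_zero, List.prod_cons, List.prod_nil, mul_one,
        Polynomial.eval_X, Polynomial.eval_C, Complex.conj_ofReal, expConjHelper]
      rfl
    · intro β
      rw [normSq_iff]
      simp only [Polynomial.eval_X, Polynomial.eval_C, Complex.conj_ofReal]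
      linear_combination (1 - ((Real.cosh β : ℂ)) ^ 2) * heHelper (Φ 0)
  | succ m ih =>
    obtain ⟨P, Q, hP1, hQ1, hP2, hQ2, hM, hN⟩ := ih (fun i => Φ i.succ)
    refine ⟨X * P + C (Complex.exp (Complex.I * (Φ 0))) * ((X ^ 2 - 1) * Q.map (starRingEnd ℂ)),
      X * Q + C (Complex.exp (Complex.I * (Φ 0))) * P.map (starRingEnd ℂ),
      ?_, ?_, ?_, ?_, ?_, ?_⟩
    · apply le_trans (Polynomial.natDegree_add_le _ _)
      rw [max_le_iff]
      constructor
      · calc (X * P).natDegree ≤ X.natDegree + P.natDegree := Polynomial.natDegree_mul_le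
          _ ≤ m + 2 := by rw [Polynomial.natDegree_X]; omega
      · calc (C (Complex.exp (Complex.I * (Φ 0))) * ((X ^ 2 - 1) * Q.map (starRingEnd ℂ))).natDegree
            ≤ (C (Complex.exp (Complex.I * (Φ 0)))).natDegree
              + ((X ^ 2 - 1) * Q.map (starRingEnd ℂ)).natDegree :=
              Polynomial.natDegree_mul_le
          _ ≤ 0 + (((X:Polynomial ℂ) ^ 2 - 1).natDegree + (Q.map (starRingEnd ℂ)).natDegree) := by
              rw [Polynomial.natDegree_C]
              exact Nat.add_le_add_left Polynomial.natDegree_mul_le 0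
          _ ≤ m + 2 := by
              have h1 : ((X:Polynomial ℂ) ^ 2 - 1).natDegree ≤ 2 := by
                apply le_trans (Polynomial.natDegree_sub_le _ _)
                simp [Polynomial.natDegree_X_pow]
              have h2 : (Q.map (starRingEnd ℂ)).natDegree ≤ m :=
                le_trans Polynomial.natDegree_map_le hQ1
              omega
    · apply le_trans (Polynomial.natDegree_add_le _ _)
      rw [max_le_iff]
      constructor
      · calc (X * Q).natDegree ≤ X.natDegree + Q.natDegree := Polynomial.natDegree_mul_le
          _ ≤ m + 1 := by rw [Polynomial.natDegree_X]; omega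
      · calc (C (Complex.exp (Complex.I * (Φ 0))) * P.map (starRingEnd ℂ)).natDegree
            ≤ (C (Complex.exp (Complex.I * (Φ 0)))).natDegree
              + (P.map (starRingEnd ℂ)).natDegree := Polynomial.natDegree_mul_le
          _ ≤ m + 1 := by
              rw [Polynomial.natDegree_C]
              have := le_trans (Polynomial.natDegree_map_le
                (f := starRingEnd ℂ) (p := P)) hP1
              omega
    · have h1 := parity_mul parity_X hP2
      have h2 := parity_mul (parity_C (Complex.exp (Complex.I * (Φ 0))))
        (parity_mul parity_X2sub1 (parity_map hQ2))
      exact parity_add (a := m + 2)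
        (fun k hk => by rw [h1 k hk]; omega) (fun k hk => by rw [h2 k hk]; omega)
    · have h1 := parity_mul parity_X hQ2
      have h2 := parity_mul (parity_C (Complex.exp (Complex.I * (Φ 0)))) (parity_map hP2)
      exact parity_add (a := m + 1)
        (fun k hk => by rw [h1 k hk]; omega) (fun k hk => by rw [h2 k hk]; omega)
    · intro β
      rw [List.ofFn_succ, List.prod_cons, hM β]
      have hs : ((Real.sinh β : ℂ)) ^ 2 = ((Real.cosh β : ℂ)) ^ 2 - 1 := by
        rw [← Complex.ofReal_pow, ← Complex.ofReal_pow, ← Complex.ofReal_one,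
          ← Complex.ofReal_sub, Complex.ofReal_inj]
        have := Real.cosh_sq_sub_sinh_sq β
        linarith
      ext i j
      fin_cases i <;> fin_cases j <;>
        simp only [phasedBoost, Matrix.mul_apply, Fin.sum_univ_two, Matrix.cons_val',
          Matrix.cons_val_zero, Matrix.cons_val_one, Matrix.head_cons, Matrix.head_fin_const,
          Matrix.empty_val', Matrix.cons_val_fin_one, Fin.mk_zero, Fin.mk_one, Fin.isValue,
          Matrix.of_apply, Polynomial.eval_add, Polynomial.eval_mul, Polynomial.eval_X,
          Polynomial.eval_C, Polynomial.eval_pow, Polynomial.eval_sub, Polynomial.eval_one,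
          evalMapConj, _root_.map_add, _root_.map_mul, _root_.map_sub, _root_.map_pow,
          _root_.map_one, Complex.conj_conj, Complex.conj_ofReal]
      · linear_combination (Complex.exp (Complex.I * (Φ 0)) *
          (starRingEnd ℂ) (Q.eval ((Real.cosh β : ℂ)))) * hs
      · ring
      · rw [← expConjHelper]; ring
      · rw [← expConjHelper]
        linear_combination ((starRingEnd ℂ) (Complex.exp (Complex.I * (Φ 0))) *
          Q.eval ((Real.cosh β : ℂ))) * hs
    · intro β
      have key := hN β
      rw [normSq_iff] at key ⊢
      simp only [Polynomial.eval_add, Polynomial.eval_mul, Polynomial.eval_X,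
        Polynomial.eval_C, Polynomial.eval_pow, Polynomial.eval_sub, Polynomial.eval_one,
        evalMapConj, _root_.map_add, _root_.map_mul, _root_.map_sub, _root_.map_pow,
        _root_.map_one, Complex.conj_conj, Complex.conj_ofReal]
      linear_combination key +
        ((((Real.cosh β : ℂ)) ^ 2 - 1) ^ 2 *
            (Q.eval ((Real.cosh β : ℂ)) * (starRingEnd ℂ) (Q.eval ((Real.cosh β : ℂ)))) -
          (((Real.cosh β : ℂ)) ^ 2 - 1) *
            (P.eval ((Real.cosh β : ℂ)) * (starRingEnd ℂ) (P.eval ((Real.cosh β : ℂ))))) *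
          heHelper (Φ 0)
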